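/- Let A = VΛVᴴ be positive semidefinite with ordered eigenvalues λ1 ≥ … ≥ λK > 0, let q ≤ min{M,K}, and define the q×q diagonal matrix Φ by |φ_ii|² = (p0 + Σ_{j=1}^q λ_j^{-1})/q − λ_i^{-1}, assumed nonnegative for all i ≤ q. Then F = Ṽ_q [Φ 0] Ψ (Ψ any M×M unitary, Ṽ_q the first q columns of V) satisfies tr(FᴴF) = p0 and det(I + FᴴAF) = ((p0 + Σ_{j=1}^q λ_j^{-1})/q)^q ∏_{j=1}^q λ_j. -/

import Mathlib

open Matrix Finset

/-- The waterfilling precoder `F = Ṽ_q [Φ 0] Ψ`, with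
`|φ_ii|² = (p0 + Σ_{j=1}^q λ_j⁻¹)/q − λ_i⁻¹`, uses exactly the power `p0` and
achieves `det(I + FᴴAF) = ((p0 + Σ_{j=1}^q λ_j⁻¹)/q)^q ∏_{j=1}^q λ_j`. -/
theorem stmt13 (K M q : ℕ) (hq : 0 < q) (hqM : q ≤ M) (hqK : q ≤ K)
    (p0 : ℝ) (hp0 : 0 < p0)
    (V : Matrix (Fin K) (Fin K) ℂ) (hV : Vᴴ * V = 1)
    (μ : ℕ → ℝ) (hpos : ∀ i < K, 0 < μ i)
    (hmono : ∀ i j : ℕ, i ≤ j → j < K → μ j ≤ μ i)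
    (A : Matrix (Fin K) (Fin K) ℂ)
    (hA : A = V * Matrix.diagonal (fun i : Fin K => (μ (i : ℕ) : ℂ)) * Vᴴ)
    (Φ : Matrix (Fin q) (Fin q) ℂ)
    (hΦdiag : ∀ i j : Fin q, i ≠ j → Φ i j = 0)
    (hΦ : ∀ i : Fin q, ‖Φ i i‖ ^ 2 =
      (p0 + ∑ j ∈ Finset.range q, (μ j)⁻¹) / q - (μ (i : ℕ))⁻¹)
    (Ψ : Matrix (Fin M) (Fin M) ℂ) (hΨ : Ψᴴ * Ψ = 1)
    (Pad : Matrix (Fin q) (Fin M) ℂ)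
    (hPad : ∀ (i : Fin q) (j : Fin M),
      Pad i j = if h : (j : ℕ) < q then Φ i ⟨(j : ℕ), h⟩ else 0)
    (F : Matrix (Fin K) (Fin M) ℂ)
    (hF : F = V.submatrix id (Fin.castLE hqK) * Pad * Ψ) :
    (Fᴴ * F).trace = (p0 : ℂ) ∧
    (1 + Fᴴ * A * F).det =
      ((((p0 + ∑ j ∈ Finset.range q, (μ j)⁻¹) / q) ^ q *
          ∏ j ∈ Finset.range q, μ j : ℝ) : ℂ) := by
  set e : Fin q → Fin K := Fin.castLE hqK with he
  set S : ℝ := ∑ j ∈ Finset.range q, (μ j)⁻¹ with hS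
  set t : ℝ := (p0 + S) / q with ht
  have hq' : (q : ℝ) ≠ 0 := Nat.cast_ne_zero.mpr hq.ne'
  have hΨΨ : Ψ * Ψᴴ = 1 := mul_eq_one_comm.mp hΨ
  have hdetΨ : Ψᴴ.det * Ψ.det = 1 := by
    rw [← Matrix.det_mul, hΨ, Matrix.det_one]
  have hein : Function.Injective e := Fin.castLE_injective hqK
  -- entries of Vᴴ V
  have h1 : ∀ a b : Fin K, (∑ k, star (V k a) * V k b) = if a = b then (1:ℂ) else 0 := by
    intro a b
    have := congrFun (congrFun hV a) b
    simpa [Matrix.mul_apply, Matrix.conjTranspose_apply, Matrix.one_apply] using this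
  -- sandwich with Pad
  have hsand : ∀ (w : Fin q → ℂ),
      Padᴴ * Matrix.diagonal w * Pad =
        Matrix.diagonal (fun j : Fin M => if h : (j : ℕ) < q then
          star (Φ ⟨(j : ℕ), h⟩ ⟨(j : ℕ), h⟩) * w ⟨(j : ℕ), h⟩ * Φ ⟨(j : ℕ), h⟩ ⟨(j : ℕ), h⟩
          else 0) := by
    intro w
    ext j k
    rw [Matrix.mul_apply]
    by_cases hj : (j : ℕ) < q
    · rw [Finset.sum_eq_single (⟨(j : ℕ), hj⟩ : Fin q)]
      · rw [Matrix.mul_diagonal, Matrix.conjTranspose_apply, hPad, hPad]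
        simp only [dif_pos hj]
        by_cases hk : (k : ℕ) < q
        · simp only [dif_pos hk]
          by_cases hjk : j = k
          · subst hjk
            simp [Matrix.diagonal_apply_eq, dif_pos hj]
          · have hne : (⟨(j : ℕ), hj⟩ : Fin q) ≠ ⟨(k : ℕ), hk⟩ := by
              intro h
              exact hjk (Fin.ext (Fin.mk_eq_mk.mp h))
            rw [hΦdiag _ _ hne, Matrix.diagonal_apply_ne _ hjk]
            ring
        · have hjk : j ≠ k := fun h => hk (h ▸ hj)
          rw [Matrix.diagonal_apply_ne _ hjk, dif_neg hk, mul_zero]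
      · intro b _ hb
        rw [Matrix.mul_diagonal, Matrix.conjTranspose_apply, hPad]
        simp only [dif_pos hj]
        rw [hΦdiag _ _ hb]
        simp
      · intro h
        exact absurd (Finset.mem_univ _) h
    · have hall : ∀ i : Fin q, (Padᴴ * Matrix.diagonal w) j i * Pad i k = 0 := by
        intro i
        rw [Matrix.mul_diagonal, Matrix.conjTranspose_apply, hPad]
        simp [dif_neg hj]
      rw [Finset.sum_congr rfl fun i _ => hall i, Finset.sum_const_zero]
      by_cases hjk : j = k
      · subst hjk
        simp [Matrix.diagonal_apply_eq, dif_neg hj]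
      · rw [Matrix.diagonal_apply_ne _ hjk]
  -- V-submatrix identities
  have hVqVq : (V.submatrix id e)ᴴ * (V.submatrix id e) = (1 : Matrix (Fin q) (Fin q) ℂ) := by
    ext i j
    rw [Matrix.mul_apply]
    simp only [Matrix.conjTranspose_apply, Matrix.submatrix_apply, id]
    rw [h1 (e i) (e j)]
    simp [Matrix.one_apply, hein.eq_iff]
  have hVAV : Vᴴ * A * V = Matrix.diagonal (fun i : Fin K => (μ (i : ℕ) : ℂ)) := by
    rw [hA]
    simp only [← Matrix.mul_assoc]
    rw [hV, Matrix.one_mul, Matrix.mul_assoc, hV, Matrix.mul_one]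
  have hsandA : (V.submatrix id e)ᴴ * A * (V.submatrix id e)
      = Matrix.diagonal (fun i : Fin q => (μ ((i : Fin q) : ℕ) : ℂ)) := by
    ext i j
    have hrw : ((V.submatrix id e)ᴴ * A * (V.submatrix id e)) i j
        = (Vᴴ * A * V) (e i) (e j) := by
      simp [Matrix.mul_apply, Matrix.conjTranspose_apply]
    rw [hrw, hVAV]
    by_cases hij : i = j
    · subst hij
      simp [Matrix.diagonal_apply_eq, he]
    · rw [Matrix.diagonal_apply_ne _ (fun h => hij (hein h)), Matrix.diagonal_apply_ne _ hij]
  -- F-sandwich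
  have hFXF : ∀ (X : Matrix (Fin K) (Fin K) ℂ),
      Fᴴ * X * F
        = Ψᴴ * (Padᴴ * ((V.submatrix id e)ᴴ * X * (V.submatrix id e)) * Pad) * Ψ := by
    intro X
    rw [hF]
    simp only [Matrix.conjTranspose_mul, Matrix.mul_assoc]
  have hFF : Fᴴ * F = Ψᴴ * (Padᴴ * Pad) * Ψ := by
    have h := hFXF 1
    simp only [Matrix.mul_one] at h
    rw [h, hVqVq, Matrix.mul_one]
  have hPP : Padᴴ * Pad = Matrix.diagonal (fun j : Fin M => if h : (j : ℕ) < q then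
      star (Φ ⟨(j : ℕ), h⟩ ⟨(j : ℕ), h⟩) * 1 * Φ ⟨(j : ℕ), h⟩ ⟨(j : ℕ), h⟩ else 0) := by
    have h := hsand (fun _ => 1)
    rwa [Matrix.diagonal_one, Matrix.mul_one] at h
  -- star z * z for diagonal entries
  have hzz : ∀ (n : ℕ) (h : n < q),
      star (Φ ⟨n, h⟩ ⟨n, h⟩) * Φ ⟨n, h⟩ ⟨n, h⟩ = ((t - (μ n)⁻¹ : ℝ) : ℂ) := by
    intro n h
    have habs : star (Φ ⟨n, h⟩ ⟨n, h⟩) * Φ ⟨n, h⟩ ⟨n, h⟩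
        = ((‖Φ ⟨n, h⟩ ⟨n, h⟩‖ ^ 2 : ℝ) : ℂ) := by
      rw [Complex.star_def, mul_comm, Complex.mul_conj, Complex.normSq_eq_norm_sq]
    rw [habs, hΦ ⟨n, h⟩]
  constructor
  · -- trace part
    rw [hFF, Matrix.trace_mul_cycle, hΨΨ, Matrix.one_mul, hPP, Matrix.trace_diagonal]
    rw [Fin.sum_univ_eq_sum_range (fun n => if h : n < q then
      star (Φ ⟨n, h⟩ ⟨n, h⟩) * 1 * Φ ⟨n, h⟩ ⟨n, h⟩ else 0)]
    rw [← Finset.sum_subset (Finset.range_subset_range.mpr hqM)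
      (fun x _ hx => dif_neg (by simpa using hx))]
    have hsum : ∀ n ∈ Finset.range q, (if h : n < q then
        star (Φ ⟨n, h⟩ ⟨n, h⟩) * 1 * Φ ⟨n, h⟩ ⟨n, h⟩ else 0)
        = ((t - (μ n)⁻¹ : ℝ) : ℂ) := by
      intro n hn
      have h : n < q := Finset.mem_range.mp hn
      rw [dif_pos h, mul_one, hzz n h]
    rw [Finset.sum_congr rfl hsum, ← Complex.ofReal_sum]
    have : ∑ n ∈ Finset.range q, (t - (μ n)⁻¹) = p0 := by
      rw [Finset.sum_sub_distrib, Finset.sum_const, Finset.card_range, nsmul_eq_mul, ← hS, ht]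
      field_simp
      ring
    rw [this]
  · -- determinant part
    rw [hFXF A, hsandA, hsand (fun i : Fin q => (μ ((i : Fin q) : ℕ) : ℂ))]
    set d : Fin M → ℂ := fun j : Fin M => if h : (j : ℕ) < q then
      star (Φ ⟨(j : ℕ), h⟩ ⟨(j : ℕ), h⟩) * ((μ (j : ℕ) : ℂ)) * Φ ⟨(j : ℕ), h⟩ ⟨(j : ℕ), h⟩
      else 0 with hd
    have hsw : (1 : Matrix (Fin M) (Fin M) ℂ) + Ψᴴ * Matrix.diagonal d * Ψ
        = Ψᴴ * ((1 : Matrix (Fin M) (Fin M) ℂ) + Matrix.diagonal d) * Ψ := by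
      rw [Matrix.mul_add, Matrix.mul_one, Matrix.add_mul, hΨ]
    rw [hsw, Matrix.det_mul, Matrix.det_mul]
    have hone : (1 : Matrix (Fin M) (Fin M) ℂ) + Matrix.diagonal d
        = Matrix.diagonal (fun j => 1 + d j) := by
      rw [← Matrix.diagonal_one, Matrix.diagonal_add]
    rw [hone, Matrix.det_diagonal]
    rw [show Ψᴴ.det * (∏ i, (1 + d i)) * Ψ.det
        = (Ψᴴ.det * Ψ.det) * ∏ i, (1 + d i) by ring, hdetΨ, one_mul]
    rw [Fin.prod_univ_eq_prod_range (fun n => 1 + (if h : n < q then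
      star (Φ ⟨n, h⟩ ⟨n, h⟩) * ((μ n : ℂ)) * Φ ⟨n, h⟩ ⟨n, h⟩ else 0))]
    rw [← Finset.prod_subset (Finset.range_subset_range.mpr hqM)
      (fun x _ hx => by rw [dif_neg (by simpa using hx), add_zero])]
    have hterm : ∀ n ∈ Finset.range q, (1 + (if h : n < q then
        star (Φ ⟨n, h⟩ ⟨n, h⟩) * ((μ n : ℂ)) * Φ ⟨n, h⟩ ⟨n, h⟩ else 0))
        = ((μ n * t : ℝ) : ℂ) := by
      intro n hn
      have h : n < q := Finset.mem_range.mp hn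
      have hμ : μ n ≠ 0 := (hpos n (lt_of_lt_of_le h hqK)).ne'
      rw [dif_pos h,
        show star (Φ ⟨n, h⟩ ⟨n, h⟩) * ((μ n : ℂ)) * Φ ⟨n, h⟩ ⟨n, h⟩
          = (μ n : ℂ) * (star (Φ ⟨n, h⟩ ⟨n, h⟩) * Φ ⟨n, h⟩ ⟨n, h⟩) from by ring,
        hzz n h]
      have hr : (1 : ℝ) + μ n * (t - (μ n)⁻¹) = μ n * t := by
        rw [mul_sub, mul_inv_cancel₀ hμ]
        ring
      rw [← hr]
      push_cast
      ring
    rw [Finset.prod_congr rfl hterm, ← Complex.ofReal_prod]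
    congr 1
    rw [Finset.prod_mul_distrib, Finset.prod_const, Finset.card_range]
    ring
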